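/- For every n ≥ 1 and every k with 0 ≤ k ≤ n, the number of signed permutations b ∈ B_n(21, 2̄1̄) with exactly k descents (i.e., |Des(b)| = k) equals C(n,k)². -/

import Mathlib

/-- A signed permutation of `[n]`: an underlying (absolute-value) permutation
`perm` of `Fin n` (0-based) together with a bar indicator on each position. -/
structure SignedPerm (n : ℕ) where
  perm : Equiv.Perm (Fin n)
  bar : Fin n → Bool

/-- `b` avoids the patterns `21` and `2̄1̄`: there are no positions `i < j`
with `b_i` and `b_j` both barred or both unbarred and `|b_i| > |b_j|`. -/
def AvoidsB {n : ℕ} (b : SignedPerm n) : Prop :=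
  ∀ i j : Fin n, i < j → b.bar i = b.bar j → ¬ b.perm j < b.perm i

/-- The rank of the symbol in position `i` of `b` with respect to the total
order `1 < 2 < ⋯ < n < n̄ < ⋯ < 2̄ < 1̄` (0-based: an unbarred value `v` has
rank `v`, a barred value `v` has rank `2n - 1 - v`). -/
def symbKey {n : ℕ} (b : SignedPerm n) (i : Fin n) : ℕ :=
  if b.bar i then 2 * n - 1 - (b.perm i : ℕ) else (b.perm i : ℕ)

/-- The descent set of a signed permutation, as a set of 1-based positions in
`[n]`: `i ∈ [n-1]` is a descent iff `b_i > b_{i+1}` in the order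
`1 < ⋯ < n < n̄ < ⋯ < 1̄`, and `n` is a descent iff `b_n` is barred. -/
def DesB {n : ℕ} (b : SignedPerm n) : Set ℕ :=
  {i | (∃ h : 1 ≤ i ∧ i < n,
          symbKey b ⟨i, h.2⟩ <
            symbKey b ⟨i - 1, Nat.lt_of_le_of_lt (Nat.sub_le i 1) h.2⟩)
    ∨ (∃ h : 0 < n, i = n ∧ b.bar ⟨n - 1, Nat.sub_lt h Nat.one_pos⟩ = true)}

lemma agree_on {n : ℕ} (S T : Finset (Fin n)) (hST : S.card = T.card)
    (p q : Fin n → Fin n)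
    (hpT : ∀ i ∈ S, p i ∈ T) (hqT : ∀ i ∈ S, q i ∈ T)
    (hpm : ∀ i j : Fin n, i ∈ S → j ∈ S → i < j → p i < p j)
    (hqm : ∀ i j : Fin n, i ∈ S → j ∈ S → i < j → q i < q j) :
    ∀ i ∈ S, p i = q i := by
  set f : S → T := fun x => ⟨p x, hpT x x.2⟩ with hf
  set g : S → T := fun x => ⟨q x, hqT x x.2⟩ with hg
  have hfm : StrictMono f := fun x y h =>
    Subtype.mk_lt_mk.2 (hpm x y x.2 y.2 (Subtype.coe_lt_coe.2 h))
  have hgm : StrictMono g := fun x y h =>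
    Subtype.mk_lt_mk.2 (hqm x y x.2 y.2 (Subtype.coe_lt_coe.2 h))
  have hcard : Fintype.card S = Fintype.card T := by
    simpa [Fintype.card_coe] using hST
  have hfs : Function.Surjective f :=
    ((Fintype.bijective_iff_injective_and_card f).2 ⟨hfm.injective, hcard⟩).2
  have hgs : Function.Surjective g :=
    ((Fintype.bijective_iff_injective_and_card g).2 ⟨hgm.injective, hcard⟩).2
  have hwf : WellFoundedLT S := Finite.to_wellFoundedLT
  have : f = g := by
    rw [← StrictMono.range_inj hfm hgm]
    rw [Set.range_eq_univ.2 hfs, Set.range_eq_univ.2 hgs]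
  intro i hi
  have := congrFun this ⟨i, hi⟩
  exact Subtype.ext_iff.1 this


lemma exists_perm {n : ℕ} (S T : Finset (Fin n)) (hST : S.card = T.card) :
    ∃ p : Equiv.Perm (Fin n), (∀ i, i ∈ S ↔ p i ∈ T) ∧
      (∀ i j : Fin n, i < j → (i ∈ S ↔ j ∈ S) → p i < p j) := by
  classical
  have hC : Sᶜ.card = Tᶜ.card := by
    rw [Finset.card_compl, Finset.card_compl, hST]
  set eS := S.orderIsoOfFin rfl
  set eT := T.orderIsoOfFin hST.symm
  set eS' := Sᶜ.orderIsoOfFin rfl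
  set eT' := Tᶜ.orderIsoOfFin hC.symm
  set f : Fin n → Fin n := fun i =>
    if h : i ∈ S then (eT (eS.symm ⟨i, h⟩) : Fin n)
    else (eT' (eS'.symm ⟨i, Finset.mem_compl.2 h⟩) : Fin n) with hf
  have hmem : ∀ i, i ∈ S ↔ f i ∈ T := by
    intro i
    constructor
    · intro h; rw [hf]; simp only [dif_pos h]; exact Finset.coe_mem _
    · intro h
      by_contra hc
      rw [hf] at h; simp only [dif_neg hc] at h
      exact (Finset.mem_compl.1 (Finset.coe_mem (eT' (eS'.symm ⟨i, Finset.mem_compl.2 hc⟩)))) h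
  have hmono : ∀ i j : Fin n, i < j → (i ∈ S ↔ j ∈ S) → f i < f j := by
    intro i j hij hiff
    by_cases h : i ∈ S
    · have hj : j ∈ S := hiff.1 h
      rw [hf]; simp only [dif_pos h, dif_pos hj]
      rw [Subtype.coe_lt_coe]
      apply eT.strictMono
      apply eS.symm.strictMono
      exact Subtype.mk_lt_mk.2 hij
    · have hj : j ∉ S := fun hc => h (hiff.2 hc)
      rw [hf]; simp only [dif_neg h, dif_neg hj]
      rw [Subtype.coe_lt_coe]
      apply eT'.strictMono
      apply eS'.symm.strictMono
      exact Subtype.mk_lt_mk.2 hij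
  have hinj : Function.Injective f := by
    intro i j hfij
    by_contra hne
    by_cases hiff : (i ∈ S ↔ j ∈ S)
    · rcases Fin.lt_or_lt_of_ne hne with h | h
      · exact absurd hfij (ne_of_lt (hmono i j h hiff))
      · exact absurd hfij.symm (ne_of_lt (hmono j i h (Iff.symm hiff)))
    · rcases not_iff.1 hiff with ⟨h⟩
      by_cases hi : i ∈ S
      · have : f i ∈ T := (hmem i).1 hi
        have hj : j ∉ S := fun hc => hiff ⟨fun _ => hc, fun _ => hi⟩
        have : f j ∉ T := fun hc => hj ((hmem j).2 hc)
        rw [hfij] at *; exact this ‹f j ∈ T›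
      · have hj : j ∈ S := by
          by_contra hj
          exact hiff ⟨fun hc => absurd hc hi, fun hc => absurd hc hj⟩
        have h1 : f j ∈ T := (hmem j).1 hj
        have h2 : f i ∉ T := fun hc => hi ((hmem i).2 hc)
        rw [hfij] at h2; exact h2 h1
  refine ⟨Equiv.ofBijective f (Finite.injective_iff_bijective.mp hinj), ?_, ?_⟩
  · intro i; exact hmem i
  · intro i j h1 h2; exact hmono i j h1 h2


lemma des_eq {n : ℕ} (b : SignedPerm n) (hb : AvoidsB b) :
    DesB b = ↑((Finset.univ.filter fun i : Fin n => b.bar i = true).image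
      (fun i : Fin n => (i : ℕ) + 1)) := by
  ext m
  simp only [Finset.coe_image, Set.mem_image, Finset.mem_coe, Finset.mem_filter,
    Finset.mem_univ, true_and, DesB, Set.mem_setOf_eq]
  constructor
  · rintro (⟨⟨h1, h2⟩, hkey⟩ | ⟨hn, hm, hbar⟩)
    case mp.inr => subst m; exact ⟨⟨n - 1, by omega⟩, hbar, by simp; omega⟩
    case mp.inl =>
      set i0 : Fin n := ⟨m - 1, by omega⟩ with hi0def
      set i1 : Fin n := ⟨m, h2⟩ with hi1def
      have hkey' : symbKey b i1 < symbKey b i0 := hkey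
      refine ⟨i0, ?_, by simp [hi0def]; omega⟩
      by_contra hfalse
      have hbar0 : b.bar i0 = false := by simpa using hfalse
      have hlt : i0 < i1 := by rw [Fin.lt_def]; simp [hi0def, hi1def]; omega
      have hv0 : ((b.perm i0 : Fin n) : ℕ) < n := (b.perm i0).2
      have hv1 : ((b.perm i1 : Fin n) : ℕ) < n := (b.perm i1).2
      rcases h : b.bar i1 with _ | _
      · have hav := hb i0 i1 hlt (by rw [hbar0, h])
        have hnlt : ¬ ((b.perm i1 : ℕ) < (b.perm i0 : ℕ)) := fun hc => hav (Fin.lt_def.2 hc)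
        simp only [symbKey, hbar0, h, Bool.false_eq_true, if_false] at hkey'
        omega
      · simp only [symbKey, hbar0, h, Bool.false_eq_true, if_false, if_true] at hkey'
        omega
  · rintro ⟨i, hbar, rfl⟩
    have hin : (i : ℕ) < n := i.2
    rcases Nat.lt_or_ge ((i : ℕ) + 1) n with h | h
    · left
      refine ⟨⟨by omega, h⟩, ?_⟩
      set i1 : Fin n := ⟨(i : ℕ) + 1, h⟩ with hi1def
      show symbKey b i1 < symbKey b ⟨(i : ℕ) + 1 - 1, by omega⟩
      have hi0 : (⟨(i : ℕ) + 1 - 1, by omega⟩ : Fin n) = i := by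
        apply Fin.ext; simp
      rw [hi0]
      have hlt : i < i1 := by rw [Fin.lt_def]; simp [hi1def]
      have hv0 : ((b.perm i : Fin n) : ℕ) < n := (b.perm i).2
      have hv1 : ((b.perm i1 : Fin n) : ℕ) < n := (b.perm i1).2
      rcases h1 : b.bar i1 with _ | _
      · simp only [symbKey, hbar, h1, Bool.false_eq_true, if_true, if_false]
        omega
      · have hav := hb i i1 hlt (by rw [hbar, h1])
        have hne : b.perm i ≠ b.perm i1 := fun hc => (Fin.ne_of_lt hlt) (b.perm.injective hc)
        have hlt2 : (b.perm i : ℕ) < (b.perm i1 : ℕ) := by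
          rcases Fin.lt_or_lt_of_ne hne with hc | hc
          · exact hc
          · exact absurd hc hav
        simp only [symbKey, hbar, h1, if_true]
        omega
    · right
      have hmn : (i : ℕ) + 1 = n := by omega
      refine ⟨by omega, hmn, ?_⟩
      have heq : (⟨n - 1, by omega⟩ : Fin n) = i := by apply Fin.ext; simp; omega
      rw [heq]; exact hbar


lemma val_succ_inj {n : ℕ} : Function.Injective (fun i : Fin n => (i : ℕ) + 1) :=
  fun a b h => Fin.val_injective (by simpa using h)

lemma ncard_des {n : ℕ} (b : SignedPerm n) (hb : AvoidsB b) :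
    (DesB b).ncard = (Finset.univ.filter fun i : Fin n => b.bar i = true).card := by
  rw [des_eq b hb, Set.ncard_coe_finset, Finset.card_image_of_injective _ val_succ_inj]

/-- The number of `(21, 2̄1̄)`-avoiding signed permutations of `[n]` with
exactly `k` descents equals `C(n,k)²`. -/
theorem stmt15 (n k : ℕ) (hn : 1 ≤ n) (hk : k ≤ n) :
    Nat.card {b : SignedPerm n // AvoidsB b ∧ (DesB b).ncard = k} =
      n.choose k ^ 2 := by
  classical
  set P := {S : Finset (Fin n) // S.card = k} with hP
  -- barred-value strict monotonicity facts
  have keymono : ∀ (b : SignedPerm n), AvoidsB b → ∀ i j : Fin n,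
      i < j → b.bar i = b.bar j → b.perm i < b.perm j := by
    intro b hb i j hij hbar
    have h1 := hb i j hij hbar
    have hne : b.perm i ≠ b.perm j := fun hc => (Fin.ne_of_lt hij) (b.perm.injective hc)
    rcases Fin.lt_or_lt_of_ne hne with h | h
    · exact h
    · exact absurd h h1
  set F : {b : SignedPerm n // AvoidsB b ∧ (DesB b).ncard = k} → P × P := fun b =>
    (⟨Finset.univ.filter fun i : Fin n => b.1.bar i = true, by
        rw [← ncard_des b.1 b.2.1]; exact b.2.2⟩,
     ⟨(Finset.univ.filter fun i : Fin n => b.1.bar i = true).image b.1.perm, by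
        rw [Finset.card_image_of_injective _ b.1.perm.injective,
          ← ncard_des b.1 b.2.1]; exact b.2.2⟩) with hF
  have hbij : Function.Bijective F := by
    constructor
    · rintro ⟨b, hb, hbk⟩ ⟨b', hb', hbk'⟩ heq
      simp only [hF, Prod.mk.injEq, Subtype.mk.injEq] at heq
      obtain ⟨hSe, hTe⟩ := heq
      replace hSe := congrArg Subtype.val hSe
      replace hTe := congrArg Subtype.val hTe
      simp only at hSe hTe
      set S := Finset.univ.filter fun i : Fin n => b.bar i = true with hSdef
      set T := S.image b.perm with hTdef
      have hmemS : ∀ i : Fin n, i ∈ S ↔ b.bar i = true := by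
        intro i; simp [hSdef]
      have hmemS' : ∀ i : Fin n, i ∈ S ↔ b'.bar i = true := by
        intro i; rw [hSe]; simp
      have hbar : b.bar = b'.bar := by
        funext i
        rw [Bool.eq_iff_iff, ← hmemS, ← hmemS']
      have hTcard : S.card = T.card :=
        (Finset.card_image_of_injective _ b.perm.injective).symm
      -- membership facts
      have hpT : ∀ i ∈ S, b.perm i ∈ T := fun i hi => Finset.mem_image_of_mem _ hi
      have hqT : ∀ i ∈ S, b'.perm i ∈ T := by
        intro i hi
        rw [hTe]
        exact Finset.mem_image_of_mem _ (by rwa [← hSe])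
      have hpC : ∀ i ∈ Sᶜ, b.perm i ∈ Tᶜ := by
        intro i hi
        rw [Finset.mem_compl] at hi ⊢
        intro hc
        obtain ⟨j, hj, hji⟩ := Finset.mem_image.1 hc
        exact hi (b.perm.injective hji ▸ hj)
      have hqC : ∀ i ∈ Sᶜ, b'.perm i ∈ Tᶜ := by
        intro i hi
        rw [Finset.mem_compl] at hi ⊢
        rw [hTe]
        intro hc
        obtain ⟨j, hj, hji⟩ := Finset.mem_image.1 hc
        rw [hSe] at hi
        exact hi (b'.perm.injective hji ▸ hj)
      have hCcard : Sᶜ.card = Tᶜ.card := by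
        rw [Finset.card_compl, Finset.card_compl, hTcard]
      -- monotonicity facts
      have hpm : ∀ i j : Fin n, i ∈ S → j ∈ S → i < j → b.perm i < b.perm j := by
        intro i j hi hj hij
        exact keymono b hb i j hij (by rw [(hmemS i).1 hi, (hmemS j).1 hj])
      have hqm : ∀ i j : Fin n, i ∈ S → j ∈ S → i < j → b'.perm i < b'.perm j := by
        intro i j hi hj hij
        exact keymono b' hb' i j hij (by rw [(hmemS' i).1 hi, (hmemS' j).1 hj])
      have hmemSc : ∀ i : Fin n, i ∈ Sᶜ ↔ b.bar i = false := by
        intro i; rw [Finset.mem_compl, hmemS]; simp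
      have hmemSc' : ∀ i : Fin n, i ∈ Sᶜ ↔ b'.bar i = false := by
        intro i; rw [Finset.mem_compl, hmemS']; simp
      have hpmC : ∀ i j : Fin n, i ∈ Sᶜ → j ∈ Sᶜ → i < j → b.perm i < b.perm j := by
        intro i j hi hj hij
        exact keymono b hb i j hij (by rw [(hmemSc i).1 hi, (hmemSc j).1 hj])
      have hqmC : ∀ i j : Fin n, i ∈ Sᶜ → j ∈ Sᶜ → i < j → b'.perm i < b'.perm j := by
        intro i j hi hj hij
        exact keymono b' hb' i j hij (by rw [(hmemSc' i).1 hi, (hmemSc' j).1 hj])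
      have h1 := agree_on S T hTcard b.perm b'.perm hpT hqT hpm hqm
      have h2 := agree_on Sᶜ Tᶜ hCcard b.perm b'.perm hpC hqC hpmC hqmC
      have hperm : b.perm = b'.perm := by
        apply Equiv.coe_fn_injective
        funext i
        by_cases hi : i ∈ S
        · exact h1 i hi
        · exact h2 i (Finset.mem_compl.2 hi)
      cases b; cases b'
      simp only [Subtype.mk.injEq, SignedPerm.mk.injEq]
      exact ⟨hperm, hbar⟩
    · rintro ⟨⟨S, hS⟩, ⟨T, hT⟩⟩
      obtain ⟨p, hmem, hmono⟩ := exists_perm S T (hS.trans hT.symm)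
      set b : SignedPerm n := ⟨p, fun i => decide (i ∈ S)⟩ with hbdef
      have hav : AvoidsB b := by
        intro i j hij hbar
        have hiff : (i ∈ S ↔ j ∈ S) := decide_eq_decide.mp hbar
        exact not_lt.2 (le_of_lt (hmono i j hij hiff))
      have hfilter : (Finset.univ.filter fun i : Fin n => b.bar i = true) = S := by
        ext i; simp [hbdef]
      have hncard : (DesB b).ncard = k := by
        rw [ncard_des b hav, hfilter, hS]
      have himage : S.image p = T := by
        apply Finset.eq_of_subset_of_card_le
        · intro x hx
          obtain ⟨i, hi, rfl⟩ := Finset.mem_image.1 hx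
          exact (hmem i).1 hi
        · rw [Finset.card_image_of_injective _ p.injective, hS, hT]
      have hfilter2 : (Finset.univ.filter fun i : Fin n => decide (i ∈ S) = true) = S :=
        hfilter
      refine ⟨⟨b, hav, hncard⟩, ?_⟩
      simp only [hF, Prod.mk.injEq]
      refine ⟨Subtype.ext ?_, Subtype.ext ?_⟩
      · exact hfilter2
      · show Finset.image (⇑p) (Finset.univ.filter fun i : Fin n => decide (i ∈ S) = true) = T
        rw [hfilter2]; exact himage
  rw [Nat.card_eq_of_bijective F hbij, Nat.card_prod, hP,
    Nat.card_eq_fintype_card, Fintype.card_finset_len, Fintype.card_fin, sq]
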